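/- Let a ≥ 1. The subgroup of ℤ generated by all products C(2^a, n₁)·C(2^a, n₂)⋯C(2^a, n_m)·2^{n₁+⋯+n_m−1}, where m ≥ 1, each nⱼ ≥ 1, and n₁+⋯+n_m ≥ 2, equals 2^a ℤ. -/

import Mathlib

lemma key_dvd (a n : ℕ) (hn : 1 ≤ n) : 2 ^ a ∣ (2 ^ a).choose n * 2 ^ (n - 1) := by
  set v := n.factorization 2 with hv
  set u := n / 2 ^ v with hu
  have hn0 : n ≠ 0 := by omega
  have hvu : 2 ^ v * u = n := Nat.ordProj_mul_ordCompl_eq_self n 2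
  have hcop : (2 ^ a).Coprime u :=
    Nat.Coprime.pow_left a (Nat.coprime_ordCompl Nat.prime_two hn0)
  have hvle : v ≤ n - 1 := by
    have h1 : 2 ^ v ≤ n := Nat.ordProj_le 2 hn0
    have h2 : v < 2 ^ v := Nat.lt_two_pow_self
    omega
  have hpos : 0 < 2 ^ a := Nat.pow_pos (by norm_num)
  have h1 : 2 ^ a * (2 ^ a - 1).choose (n - 1) = (2 ^ a).choose n * n := by
    have := Nat.add_one_mul_choose_eq (2 ^ a - 1) (n - 1)
    have e1 : 2 ^ a - 1 + 1 = 2 ^ a := by omega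
    have e2 : n - 1 + 1 = n := by omega
    simp only [Nat.succ_eq_add_one, e1, e2] at this
    exact this
  have hsplit : 2 ^ (n - 1) = 2 ^ v * 2 ^ (n - 1 - v) := by
    rw [← pow_add]; congr 1; omega
  have hdvd : 2 ^ a ∣ u * ((2 ^ a).choose n * 2 ^ (n - 1)) := by
    refine ⟨(2 ^ a - 1).choose (n - 1) * 2 ^ (n - 1 - v), ?_⟩
    calc u * ((2 ^ a).choose n * 2 ^ (n - 1))
        = (2 ^ a).choose n * (2 ^ v * u) * 2 ^ (n - 1 - v) := by rw [hsplit]; ring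
      _ = (2 ^ a).choose n * n * 2 ^ (n - 1 - v) := by rw [hvu]
      _ = 2 ^ a * ((2 ^ a - 1).choose (n - 1) * 2 ^ (n - 1 - v)) := by rw [← h1]; ring
  exact hcop.dvd_of_dvd_mul_left hdvd

theorem stmt_9 (a : ℕ) (ha : 1 ≤ a) :
    AddSubgroup.closure {z : ℤ | ∃ (m : ℕ) (n : Fin m → ℕ), 1 ≤ m ∧ (∀ j, 1 ≤ n j) ∧
        2 ≤ ∑ j, n j ∧
        z = (∏ j, ((2 ^ a).choose (n j) : ℤ)) * 2 ^ ((∑ j, n j) - 1)} =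
      AddSubgroup.zmultiples ((2 : ℤ) ^ a) := by
  apply le_antisymm
  · rw [AddSubgroup.closure_le]
    rintro z ⟨m, n, hm, hn, hsum, rfl⟩
    rw [SetLike.mem_coe, AddSubgroup.mem_zmultiples_iff]
    -- reduce to nat divisibility
    have hj0 : (⟨0, hm⟩ : Fin m) ∈ (Finset.univ : Finset (Fin m)) := Finset.mem_univ _
    set j0 : Fin m := ⟨0, hm⟩
    have hle : n j0 ≤ ∑ j, n j := Finset.single_le_sum (fun i _ => Nat.zero_le _) hj0
    have hnat : (2 : ℕ) ^ a ∣ (∏ j, (2 ^ a).choose (n j)) * 2 ^ ((∑ j, n j) - 1) := by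
      rw [← Finset.mul_prod_erase Finset.univ _ hj0]
      have hsplit : (2 : ℕ) ^ ((∑ j, n j) - 1) = 2 ^ (n j0 - 1) * 2 ^ ((∑ j, n j) - n j0) := by
        rw [← pow_add]; congr 1
        have := hn j0; omega
      rw [hsplit]
      have hkey := key_dvd a (n j0) (hn j0)
      have heq : ((2 ^ a).choose (n j0) * ∏ j ∈ Finset.univ.erase j0, (2 ^ a).choose (n j)) *
          (2 ^ (n j0 - 1) * 2 ^ ((∑ j, n j) - n j0))
          = ((2 ^ a).choose (n j0) * 2 ^ (n j0 - 1)) *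
            ((∏ j ∈ Finset.univ.erase j0, (2 ^ a).choose (n j)) * 2 ^ ((∑ j, n j) - n j0)) := by
        ring
      rw [heq]
      exact hkey.mul_right _
    obtain ⟨c, hc⟩ := hnat
    refine ⟨(c : ℤ), ?_⟩
    have : ((((∏ j, (2 ^ a).choose (n j)) * 2 ^ ((∑ j, n j) - 1) : ℕ)) : ℤ)
        = (∏ j, ((2 ^ a).choose (n j) : ℤ)) * 2 ^ ((∑ j, n j) - 1) := by push_cast; ring
    rw [← this, hc, zsmul_eq_mul]
    push_cast
    ring
  · rw [AddSubgroup.zmultiples_le]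
    -- generators
    have hg1 : ((2 : ℤ) ^ (2 * a + 1)) ∈ AddSubgroup.closure {z : ℤ | ∃ (m : ℕ) (n : Fin m → ℕ),
        1 ≤ m ∧ (∀ j, 1 ≤ n j) ∧ 2 ≤ ∑ j, n j ∧
        z = (∏ j, ((2 ^ a).choose (n j) : ℤ)) * 2 ^ ((∑ j, n j) - 1)} := by
      apply AddSubgroup.subset_closure
      refine ⟨2, fun _ => 1, by norm_num, fun _ => le_refl 1, by simp, ?_⟩
      simp [Nat.choose_one_right, Fin.sum_univ_two, Fin.prod_univ_two]
      ring
    have hg2 : ((2 : ℤ) ^ a * (2 ^ a - 1)) ∈ AddSubgroup.closure {z : ℤ | ∃ (m : ℕ) (n : Fin m → ℕ),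
        1 ≤ m ∧ (∀ j, 1 ≤ n j) ∧ 2 ≤ ∑ j, n j ∧
        z = (∏ j, ((2 ^ a).choose (n j) : ℤ)) * 2 ^ ((∑ j, n j) - 1)} := by
      apply AddSubgroup.subset_closure
      refine ⟨1, fun _ => 2, le_refl 1, fun _ => by norm_num, by simp, ?_⟩
      have h2 : ((2 : ℕ) ^ a).choose 2 * 2 = 2 ^ a * (2 ^ a - 1) := by
        rw [Nat.choose_two_right]
        apply Nat.div_mul_cancel
        have : (2 : ℕ) ∣ 2 ^ a := dvd_pow_self 2 (by omega)
        exact Dvd.dvd.mul_right this _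
      have h2a : (1 : ℕ) ≤ 2 ^ a := Nat.one_le_two_pow
      simp only [Fin.sum_univ_one, Fin.prod_univ_one]
      have := congrArg (fun x : ℕ => (x : ℤ)) h2
      push_cast [h2a] at this
      push_cast
      linarith
    obtain ⟨b, rfl⟩ : ∃ b, a = b + 1 := ⟨a - 1, by omega⟩
    have comb : (2 : ℤ) ^ (b + 1) = (2 ^ b : ℤ) • (2 ^ (2 * (b + 1) + 1) : ℤ)
        + (-(2 ^ (b + 1) + 1) : ℤ) • ((2 : ℤ) ^ (b + 1) * (2 ^ (b + 1) - 1)) := by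
      simp only [zsmul_eq_mul, Int.cast_id]
      ring
    rw [comb]
    exact AddSubgroup.add_mem _ (AddSubgroup.zsmul_mem _ hg1 _) (AddSubgroup.zsmul_mem _ hg2 _)
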